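/- Let γ be a permutation of {1,…,k} arranging the strings of M in colexicographic order, i.e., such that the reversed strings T_{γ(1)}^rev, …, T_{γ(k)}^rev are in lexicographic order. Then runs(mdolBWT(M,γ)) ≤ r_OPT + 2·c_M, where r_OPT = min over all permutations σ of {1,…,k} of runs(mdolBWT(M,σ)), and c_M is the number of interesting intervals of M. -/

import Mathlib

/-- The `j`-th rotation of a string. -/
def rot {β : Type*} (l : List β) (j : ℕ) : List β := l.drop j ++ l.take j

/-- Nonstrict lexicographic order on strings. -/
def listLe {β : Type*} [LT β] (X Y : List β) : Prop := X = Y ∨ List.Lex (· < ·) X Y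

/-- The character preceding the suffix `U` in `Ti`: the last character of `W` where
`Ti = W·U`, and the sentinel `⊥` (i.e. `$`) if `U = Ti`. -/
def precChar {α : Type*} (Ti U : List α) : WithBot α :=
  match (Ti.take (Ti.length - U.length)).getLast? with
  | none => ⊥
  | some a => (a : WithBot α)

/-- `U` defines an interesting interval: `U` is a suffix of two different input strings
and the characters preceding these two occurrences differ. -/
def Interesting {α : Type*} {k : ℕ} (T : Fin k → List α) (U : List α) : Prop :=
  ∃ i j : Fin k, i ≠ j ∧ U <:+ T i ∧ U <:+ T j ∧ precChar (T i) U ≠ precChar (T j) U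

/-- The string `W_σ = T_{σ(1)}$_1 T_{σ(2)}$_2 ⋯ T_{σ(k)}$_k` over the alphabet
`Fin k ⊕ₗ α` (separators `toLex (Sum.inl p)` are pairwise distinct, increasing, and
smaller than every symbol of `Σ`). -/
def mWord {α : Type*} {k : ℕ} (T : Fin k → List α) (σ : Equiv.Perm (Fin k)) :
    List (Fin k ⊕ₗ α) :=
  (List.finRange k).flatMap fun p =>
    ((T (σ p)).map fun a => toLex (Sum.inr a)) ++ [toLex (Sum.inl p)]

/-- The multiset (list) of all rotations of `W_σ`. -/
def mRots {α : Type*} {k : ℕ} (T : Fin k → List α) (σ : Equiv.Perm (Fin k)) :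
    List (List (Fin k ⊕ₗ α)) :=
  (List.range (mWord T σ).length).map (rot (mWord T σ))

/-- The last character of a rotation, with every separator replaced by the single
sentinel `$` (here `⊥`). -/
def lastOut {α : Type*} {k : ℕ} (R : List (Fin k ⊕ₗ α)) : WithBot α :=
  match R.getLast? with
  | none => ⊥
  | some b => match ofLex b with
    | Sum.inl _ => ⊥
    | Sum.inr a => (a : WithBot α)

/-- The multidollar BWT read off from a lexicographically sorted list `L` of the
rotations of `W_σ`. -/
def mdolOf {α : Type*} {k : ℕ} (L : List (List (Fin k ⊕ₗ α))) : List (WithBot α) :=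
  L.map lastOut

/-- The number of runs (maximal blocks of consecutive equal characters) of a string. -/
def runs {γ : Type*} [DecidableEq γ] (L : List γ) : ℕ :=
  (L.destutter (· ≠ ·)).length


set_option linter.unusedSectionVars false

namespace BWTAux
open List

variable {δ : Type*} [DecidableEq δ]

def frun : Option δ → List δ → ℕ
  | _, [] => 0
  | c, a :: l => (if c = some a then 0 else 1) + frun (some a) l

@[simp] lemma frun_nil (c : Option δ) : frun c ([] : List δ) = 0 := rfl
lemma frun_cons (c : Option δ) (a : δ) (l : List δ) :
    frun c (a :: l) = (if c = some a then 0 else 1) + frun (some a) l := rfl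

lemma destutter'_length (l : List δ) : ∀ a : δ,
    (l.destutter' (· ≠ ·) a).length = 1 + frun (some a) l := by
  induction l with
  | nil => intro a; simp [frun]
  | cons b l ih =>
    intro a
    by_cases h : a = b
    · subst h
      simp [List.destutter', frun_cons, ih]
    · simp [List.destutter', h, frun_cons, ih]
      omega

lemma runs_eq_frun (L : List δ) : runs L = frun none L := by
  cases L with
  | nil => rfl
  | cons a l =>
    show (l.destutter' (· ≠ ·) a).length = _
    rw [destutter'_length, frun_cons]
    simp

lemma frun_append (Y : List δ) : ∀ (X : List δ) (c : Option δ),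
    frun c (X ++ Y) = frun c X + frun (X.getLast?.or c) Y := by
  intro X
  induction X with
  | nil => intro c; simp
  | cons a X ih =>
    intro c
    cases X with
    | nil => simp [frun_cons, ih]
    | cons b X' =>
      have h2 : ((a :: b :: X').getLast?).or c = ((b :: X').getLast?).or (some a) := by
        rw [List.getLast?_cons_cons, List.getLast?_eq_getLast (by simp)]
        rfl
      rw [List.cons_append, frun_cons, frun_cons, ih (some a), h2, Nat.add_assoc]

lemma frun_le_frun_add_one (L : List δ) (c c' : Option δ) :
    frun c L ≤ frun c' L + 1 := by
  cases L with
  | nil => simp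
  | cons a l =>
    rw [frun_cons, frun_cons]
    have : (if c = some a then 0 else 1) ≤ (if c' = some a then 0 else 1) + 1 := by
      split <;> split <;> omega
    omega

lemma frun_le_frun_none (L : List δ) (c : Option δ) : frun c L ≤ frun none L := by
  cases L with
  | nil => simp
  | cons a l =>
    rw [frun_cons, frun_cons]
    have : (if c = some a then 0 else 1) ≤ (if (none : Option δ) = some a then 0 else 1) := by
      split <;> simp
    omega

lemma getLast?_of_const {L : List δ} {v : δ} (h : ∀ x ∈ L, x = v) (hne : L ≠ []) :
    L.getLast? = some v := by
  rw [List.getLast?_eq_getLast hne]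
  exact congrArg some (h _ (List.getLast_mem hne))

lemma frun_const {L : List δ} {v : δ} (h : ∀ x ∈ L, x = v) (hne : L ≠ []) : ∀ (c : Option δ),
    frun c L = if c = some v then 0 else 1 := by
  induction L with
  | nil => simp at hne
  | cons a l ih =>
    intro c
    have ha : a = v := h a (by simp)
    subst ha
    rcases eq_or_ne l [] with rfl | hl
    · simp [frun_cons]
    · rw [frun_cons, ih (fun x hx => h x (by simp [hx])) hl]
      simp

lemma mem_destutter' {l : List δ} {b : δ} : ∀ {a : δ}, b ∈ a :: l → b ∈ l.destutter' (· ≠ ·) a := by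
  induction l with
  | nil => intro a h; simpa using h
  | cons c l ih =>
    intro a h
    by_cases hac : a = c
    · subst hac
      show b ∈ if (a ≠ a) then _ else _
      rw [if_neg (by simp)]
      exact ih (by simpa using h)
    · show b ∈ if (a ≠ c) then _ else _
      rw [if_pos hac]
      rcases List.mem_cons.1 h with rfl | h
      · exact List.mem_cons_self
      · exact List.mem_cons_of_mem _ (ih h)

lemma toFinset_destutter (L : List δ) : (L.destutter (· ≠ ·)).toFinset = L.toFinset := by
  apply Finset.Subset.antisymm
  · intro x hx
    rw [List.mem_toFinset] at *
    exact (List.destutter_sublist _ _).mem hx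
  · intro x hx
    rw [List.mem_toFinset] at *
    cases L with
    | nil => simp at hx
    | cons a l => exact mem_destutter' hx

lemma card_le_runs (L : List δ) : L.toFinset.card ≤ runs L := by
  rw [← toFinset_destutter]
  exact List.toFinset_card_le _

end BWTAux
namespace BWTAux
open List

section Sorted
variable {δ : Type*} [LinearOrder δ]

lemma runs_sorted {L : List δ} (h : L.Pairwise (· ≤ ·)) : runs L = L.toFinset.card := by
  have hsub : (L.destutter (· ≠ ·)).Sublist L := List.destutter_sublist _ _
  have hsorted : (L.destutter (· ≠ ·)).Pairwise (· ≤ ·) := h.sublist hsub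
  have hchain : List.Chain' (· ≠ ·) (L.destutter (· ≠ ·)) := List.isChain_destutter _ _
  have hlt : List.Chain' (· < ·) (L.destutter (· ≠ ·)) := by
    have hle : List.Chain' (· ≤ ·) (L.destutter (· ≠ ·)) := List.isChain_iff_pairwise.mpr hsorted
    simp only [List.Chain', List.isChain_iff_getElem] at hle hchain ⊢
    exact fun i h => lt_of_le_of_ne (hle i h) (hchain i h)
  have hnd : (L.destutter (· ≠ ·)).Nodup :=
    (List.isChain_iff_pairwise.mp hlt).imp (fun h => ne_of_lt h)
  rw [runs, ← toFinset_destutter, List.toFinset_card_of_nodup hnd]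

lemma runs_le_of_sorted_perm {L L' : List δ} (hs : L.Pairwise (· ≤ ·)) (hp : L.Perm L') :
    runs L ≤ runs L' := by
  have : L.toFinset = L'.toFinset := by
    ext x; simp [List.mem_toFinset, hp.mem_iff]
  rw [runs_sorted hs, this]
  exact card_le_runs L'

end Sorted

lemma eq_of_perm_of_const {δ : Type*} {L L' : List δ} (hp : L.Perm L')
    (hc : ∀ x ∈ L, ∀ y ∈ L, x = y) : L = L' := by
  cases L with
  | nil => exact (hp.nil_eq).symm ▸ rfl
  | cons a l =>
    have h1 : (a :: l) = List.replicate (a :: l).length a :=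
      List.eq_replicate_iff.2 ⟨rfl, fun b hb => hc b hb a (by simp)⟩
    have h2 : L' = List.replicate (a :: l).length a :=
      List.eq_replicate_iff.2 ⟨by rw [hp.length_eq], fun b hb =>
        hc b (hp.symm.subset hb) a (by simp)⟩
    rw [← h2] at h1
    exact h1

/-- The key counting lemma. -/
lemma comb {δ : Type*} [DecidableEq δ] :
    ∀ (L : List ((List δ × List δ) × Bool)) (cγ cσ : Option δ),
    (∀ x ∈ L, x.1.1 ≠ []) →
    (∀ x ∈ L, x.2 = false → x.1.1 = x.1.2 ∧ ∀ y ∈ x.1.1, ∀ z ∈ x.1.1, y = z) →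
    (∀ x ∈ L, x.2 = true → x.1.2 ≠ [] ∧ frun none x.1.1 ≤ frun none x.1.2) →
    frun cγ (L.map (fun x => x.1.1)).flatten ≤
      frun cσ (L.map (fun x => x.1.2)).flatten + 2 * (L.countP (fun x => x.2)) +
      (if cγ = cσ then 0 else 1) := by
  intro L
  induction L with
  | nil => intro cγ cσ _ _ _; simp
  | cons x L ih =>
    intro cγ cσ hne hgood hbad
    have hne1 : x.1.1 ≠ [] := hne x (by simp)
    rw [List.map_cons, List.map_cons, List.flatten_cons, List.flatten_cons,
      frun_append, frun_append]
    cases hx2 : x.2 with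
    | false =>
      obtain ⟨heq, hconst⟩ := hgood x (by simp) hx2
      obtain ⟨v, hv⟩ : ∃ v, ∀ y ∈ x.1.1, y = v := by
        rcases List.exists_mem_of_ne_nil _ hne1 with ⟨a, ha⟩
        exact ⟨a, fun y hy => hconst y hy a ha⟩
      have hlast : x.1.1.getLast? = some v := getLast?_of_const hv hne1
      have hcnt : (x :: L).countP (fun x => x.2) = L.countP (fun x => x.2) := by
        rw [List.countP_cons, hx2]; simp
      rw [← heq, hlast, hcnt, frun_const hv hne1 cγ, frun_const hv hne1 cσ]
      have hih := ih (some v) (some v) (fun y hy => hne y (by simp [hy]))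
        (fun y hy => hgood y (by simp [hy])) (fun y hy => hbad y (by simp [hy]))
      simp only [if_pos rfl, if_true, eq_self_iff_true, Nat.add_zero] at hih
      have hd : (if cγ = some v then 0 else 1) ≤
          (if cσ = some v then 0 else 1) + (if cγ = cσ then 0 else 1) := by
        by_cases h : cγ = cσ
        · subst h; simp
        · rw [if_neg h]
          rcases eq_or_ne cσ (some v) with h2 | h2
          · rw [if_neg (fun hh => h (hh.trans h2.symm)), if_pos h2]
          · rw [if_neg h2]
            split <;> omega
      simp only [Option.some_or]
      omega
    | true =>
      obtain ⟨hne2, hfle⟩ := hbad x (by simp) hx2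
      have hcnt : (x :: L).countP (fun x => x.2) = L.countP (fun x => x.2) + 1 := by
        rw [List.countP_cons, hx2]; simp
      -- getLast? values
      obtain ⟨v1, hv1⟩ : ∃ v1, x.1.1.getLast? = some v1 := by
        rw [List.getLast?_eq_getLast hne1]; exact ⟨_, rfl⟩
      obtain ⟨v2, hv2⟩ : ∃ v2, x.1.2.getLast? = some v2 := by
        rw [List.getLast?_eq_getLast hne2]; exact ⟨_, rfl⟩
      rw [hv1, hv2, hcnt]
      have hih := ih (some v1) (some v2) (fun y hy => hne y (by simp [hy]))
        (fun y hy => hgood y (by simp [hy])) (fun y hy => hbad y (by simp [hy]))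
      have h1 : frun cγ x.1.1 ≤ frun none x.1.1 := frun_le_frun_none _ _
      have h2 : frun none x.1.2 ≤ frun cσ x.1.2 + 1 := frun_le_frun_add_one _ _ _
      have h3 : (if (some v1 : Option δ) = some v2 then 0 else 1) ≤ 1 := by split <;> simp
      simp only [Option.some_or]
      omega

end BWTAux
namespace BWTAux
open List

section Order
variable {β : Type*} [LinearOrder β]

lemma listLe_iff {X Y : List β} : listLe X Y ↔ X ≤ Y := by
  constructor
  · rintro (rfl | h)
    · exact le_refl _
    · exact le_of_lt h
  · intro h
    rcases lt_or_eq_of_le h with h | h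
    · exact Or.inr h
    · exact Or.inl h

lemma listLe_antisymm : ∀ (X Y : List β), listLe X Y → listLe Y X → X = Y := by
  intro X Y h1 h2
  exact le_antisymm (listLe_iff.mp h1) (listLe_iff.mp h2)

lemma listLe_cons {v : β} {L1 L2 : List β} (h : listLe (v :: L1) (v :: L2)) : listLe L1 L2 := by
  rcases h with h | h
  · exact Or.inl (by simpa using h)
  · cases h with
    | cons h => exact Or.inr h
    | rel h => exact absurd h (lt_irrefl v)

/-- head as `WithBot`. -/
def headBot (l : List β) : WithBot β :=
  match l.head? with
  | none => ⊥
  | some a => (a : WithBot β)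

lemma headBot_le_of_listLe : ∀ (V Z Z' : List β), listLe (V ++ Z) (V ++ Z') →
    headBot Z ≤ headBot Z' := by
  intro V
  induction V with
  | nil =>
    intro Z Z' h
    rcases h with h | h
    · simp at h; subst h; exact le_refl _
    · simp only [List.nil_append] at h
      cases Z with
      | nil => exact bot_le
      | cons a z =>
        cases h with
        | cons h => exact le_refl _
        | rel h => exact (WithBot.coe_le_coe.mpr h.le)
  | cons v V ih =>
    intro Z Z' h
    exact ih Z Z' (listLe_cons h)

end Order

section Main
variable {α : Type*} [LinearOrder α] {k : ℕ}

/-- letter symbol -/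
def chr (a : α) : Fin k ⊕ₗ α := toLex (Sum.inr a)
/-- separator symbol -/
def sep (p : Fin k) : Fin k ⊕ₗ α := toLex (Sum.inl p)

lemma sep_lt_chr (p : Fin k) (a : α) : (sep p : Fin k ⊕ₗ α) < chr a :=
  Sum.Lex.inl_lt_inr p a

lemma sep_lt_sep {p q : Fin k} (h : p < q) : (sep p : Fin k ⊕ₗ α) < sep q :=
  Sum.Lex.inl_lt_inl_iff.mpr h

lemma chr_lt_chr {a b : α} (h : a < b) : (chr a : Fin k ⊕ₗ α) < chr b :=
  Sum.Lex.inr_lt_inr_iff.mpr h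

lemma lex_chr_lt {U U' : List α} (h : List.Lex (· < ·) U U') (p q : Fin k)
    (r r' : List (Fin k ⊕ₗ α)) :
    List.Lex (· < ·) (U.map chr ++ sep p :: r) (U'.map chr ++ sep q :: r') := by
  induction h with
  | nil => exact List.Lex.rel (sep_lt_chr _ _)
  | @cons a l1 l2 h ih => exact List.Lex.cons ih
  | @rel a l1 b l2 h => exact List.Lex.rel (chr_lt_chr h)

lemma lex_sep_lt (U : List α) {p q : Fin k} (h : p < q) (r r' : List (Fin k ⊕ₗ α)) :
    List.Lex (· < ·) (U.map chr ++ sep p :: r) (U.map chr ++ sep q :: r') := by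
  induction U with
  | nil => exact List.Lex.rel (sep_lt_sep h)
  | cons a l ih => exact List.Lex.cons ih

variable (T : Fin k → List α)

/-- the list of all suffixes of `l`. -/
def suffList (l : List α) : List (List α) := (List.range (l.length + 1)).map (fun o => l.drop o)

lemma mem_suffList {l U : List α} : U ∈ suffList l ↔ U <:+ l := by
  constructor
  · intro h
    rcases List.mem_map.1 h with ⟨o, _, rfl⟩
    exact List.drop_suffix o l
  · intro h
    refine List.mem_map.2 ⟨l.length - U.length, ?_, (List.suffix_iff_eq_drop.mp h).symm⟩
    rw [List.mem_range]
    omega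

lemma nodup_suffList (l : List α) : (suffList l).Nodup := by
  refine List.Nodup.map_on ?_ List.nodup_range
  intro o ho o' ho' h
  rw [List.mem_range] at ho ho'
  have := congrArg List.length h
  simp only [List.length_drop] at this
  omega

/-- The sorted list of all distinct suffixes of strings of the collection. -/
def sufA : List (List α) :=
  (((List.finRange k).flatMap (fun i => suffList (T i))).dedup).mergeSort
    (fun X Y => decide (X ≤ Y))

lemma mem_sufA {U : List α} : U ∈ sufA T ↔ ∃ i, U <:+ T i := by
  rw [sufA, List.Perm.mem_iff (List.mergeSort_perm _ _), List.mem_dedup, List.mem_flatMap]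
  constructor
  · rintro ⟨i, _, h⟩; exact ⟨i, mem_suffList.mp h⟩
  · rintro ⟨i, h⟩; exact ⟨i, List.mem_finRange i, mem_suffList.mpr h⟩

lemma nodup_sufA : (sufA T).Nodup :=
  (List.mergeSort_perm _ _).nodup_iff.mpr (List.nodup_dedup _)

lemma pairwise_le_sufA : (sufA T).Pairwise (· ≤ ·) := by
  have := List.pairwise_mergeSort (le := fun X Y : List α => decide (X ≤ Y))
    (fun a b c hab hbc => by
      rw [decide_eq_true_iff] at *; exact le_trans hab hbc)
    (fun a b => by
      rcases le_total a b with h | h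
      · simp [h]
      · simp [h])
    (((List.finRange k).flatMap (fun i => suffList (T i))).dedup)
  exact this.imp (fun h => by rwa [decide_eq_true_iff] at h)

lemma pairwise_lt_sufA : (sufA T).Pairwise (fun X Y => List.Lex (· < ·) X Y) := by
  have h := (pairwise_le_sufA T).and (nodup_sufA T)
  exact h.imp (fun ⟨hle, hne⟩ => lt_of_le_of_ne hle hne)

end Main
end BWTAux
namespace BWTAux
open List

section Word
variable {α : Type*} [LinearOrder α] {k : ℕ} (T : Fin k → List α) (σ : Equiv.Perm (Fin k))

/-- the block `T_{σ(p)} $_p`. -/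
def blk (p : Fin k) : List (Fin k ⊕ₗ α) := (T (σ p)).map chr ++ [sep p]

lemma mWord_eq : mWord T σ = (List.finRange k).flatMap (blk T σ) := rfl

/-- the canonical rotation associated to the suffix `U` of `T_{σ(p)}`. -/
def rotC (p : Fin k) (U : List α) : List (Fin k ⊕ₗ α) :=
  U.map chr ++ sep p ::
    (((List.finRange k).drop (p.val + 1)).flatMap (blk T σ) ++
      (((List.finRange k).take p.val).flatMap (blk T σ) ++
        ((T (σ p)).take ((T (σ p)).length - U.length)).map chr))

lemma rots_struct : ∀ (ps pre : List (Fin k)), pre ++ ps = List.finRange k →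
    (List.range ((ps.flatMap (blk T σ)).length)).map
        (fun t => rot (mWord T σ) ((pre.flatMap (blk T σ)).length + t))
      = ps.flatMap (fun p => (List.range ((T (σ p)).length + 1)).map
          (fun o => rotC T σ p ((T (σ p)).drop o))) := by
  intro ps
  induction ps with
  | nil => intro pre h; simp
  | cons p ps' ih =>
    intro pre h
    have hlen : pre.length < k := by
      have := congrArg List.length h
      simp only [List.length_append, List.length_cons, List.length_finRange] at this
      omega
    have hp : p = ⟨pre.length, hlen⟩ := by
      have h1 : pre.length < (pre ++ p :: ps').length := by simp
      have h2 : (pre ++ p :: ps')[pre.length]'h1 = (List.finRange k)[pre.length]'(by simp [hlen]) :=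
        List.getElem_of_eq h h1
      rw [List.getElem_append_right (le_refl _)] at h2
      simp at h2
      rw [← h2]
    have hpval : p.val = pre.length := by rw [hp]
    have hbef : ((List.finRange k).take p.val) = pre := by
      rw [hpval, ← h, List.take_left]
    have haft : ((List.finRange k).drop (p.val + 1)) = ps' := by
      rw [hpval, ← h]
      rw [show pre.length + 1 = (pre ++ [p]).length by simp]
      rw [show pre ++ p :: ps' = (pre ++ [p]) ++ ps' by simp]
      rw [List.drop_left]
    set l := T (σ p) with hl
    have hW : mWord T σ = pre.flatMap (blk T σ) ++ (blk T σ p ++ ps'.flatMap (blk T σ)) := by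
      rw [mWord_eq, ← h]
      simp
    rw [List.flatMap_cons]
    have e1 : (blk T σ p ++ ps'.flatMap (blk T σ)).length
        = (l.length + 1) + (ps'.flatMap (blk T σ)).length := by
      rw [List.length_append]
      congr 1
      simp [blk, hl]
    rw [e1, List.range_add, List.map_append, List.map_map]
    congr 1
    · -- first block
      apply List.map_congr_left
      intro o ho
      rw [List.mem_range] at ho
      have ho' : o ≤ l.length := by omega
      have hsplit : mWord T σ = (pre.flatMap (blk T σ) ++ (l.take o).map chr) ++
          ((l.drop o).map chr ++ sep p :: ps'.flatMap (blk T σ)) := by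
        have h2 : (l.take o).map (chr (k := k)) ++ (l.drop o).map chr = l.map chr := by
          rw [← List.map_append, List.take_append_drop]
        rw [hW]
        simp only [blk, ← hl]
        rw [← h2]
        simp only [List.append_assoc, List.cons_append, List.singleton_append, List.nil_append]
      have hXlen : (pre.flatMap (blk T σ) ++ (l.take o).map chr).length
          = (pre.flatMap (blk T σ)).length + o := by
        simp only [List.length_append, List.length_map, List.length_take]
        omega
      show rot (mWord T σ) ((pre.flatMap (blk T σ)).length + o) = _
      rw [rot, hsplit, ← hXlen, List.drop_left, List.take_left]
      have hlen2 : l.length - (l.drop o).length = o := by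
        simp only [List.length_drop]
        omega
      rw [rotC, hlen2, hbef, haft, ← hl]
      simp [List.append_assoc]
    · -- remaining blocks
      have hih := ih (pre ++ [p]) (by simpa using h)
      refine Eq.trans ?_ hih
      apply List.map_congr_left
      intro t _
      simp only [Function.comp]
      congr 1
      rw [List.flatMap_append, List.length_append]
      simp only [List.flatMap_cons, List.flatMap_nil, List.append_nil, blk,
        List.length_append, List.length_map, List.length_cons, List.length_nil, ← hl]
      omega

end Word
end BWTAux
namespace BWTAux
open List

section Word2
variable {α : Type*} [LinearOrder α] {k : ℕ} (T : Fin k → List α) (σ : Equiv.Perm (Fin k))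

lemma mRots_eq : mRots T σ = (List.finRange k).flatMap
    (fun p => (List.range ((T (σ p)).length + 1)).map
      (fun o => rotC T σ p ((T (σ p)).drop o))) := by
  have h := rots_struct T σ (List.finRange k) [] (by simp)
  simp only [List.flatMap_nil, List.length_nil, Nat.zero_add] at h
  rw [mRots, mWord_eq]
  exact h

/-- the list of indices `p` such that `U` is a suffix of `T (σ p)`. -/
def plist (U : List α) : List (Fin k) :=
  (List.finRange k).filter (fun p => decide (U <:+ T (σ p)))

lemma mem_plist {U : List α} {p : Fin k} : p ∈ plist T σ U ↔ U <:+ T (σ p) := by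
  rw [plist, List.mem_filter]
  simp [List.mem_finRange]

lemma nodup_plist (U : List α) : (plist T σ U).Nodup :=
  (List.nodup_finRange k).filter _

lemma pairwise_lt_plist (U : List α) : (plist T σ U).Pairwise (· < ·) :=
  (List.pairwise_lt_finRange k).filter _

/-- the canonical (sorted) list of rotations. -/
def canon : List (List (Fin k ⊕ₗ α)) :=
  (sufA T).flatMap (fun U => (plist T σ U).map (fun p => rotC T σ p U))

/-- the list of key pairs `(U, p)` grouped by suffix. -/
def pairsA : List (List α × Fin k) :=
  (sufA T).flatMap (fun U => (plist T σ U).map (fun p => (U, p)))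

/-- the list of key pairs `(U, p)` grouped by string index. -/
def pairsP : List (List α × Fin k) :=
  (List.finRange k).flatMap
    (fun p => (List.range ((T (σ p)).length + 1)).map (fun o => ((T (σ p)).drop o, p)))

lemma mem_pairsP {x : List α × Fin k} : x ∈ pairsP T σ ↔ x.1 <:+ T (σ x.2) := by
  rw [pairsP, List.mem_flatMap]
  constructor
  · rintro ⟨p, -, hx⟩
    rcases List.mem_map.1 hx with ⟨o, -, rfl⟩
    exact List.drop_suffix o _
  · intro h
    refine ⟨x.2, List.mem_finRange _, List.mem_map.2
      ⟨(T (σ x.2)).length - x.1.length, ?_, ?_⟩⟩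
    · rw [List.mem_range]
      have := h.length_le
      omega
    · rw [← List.suffix_iff_eq_drop.mp h]

lemma mem_pairsA {x : List α × Fin k} : x ∈ pairsA T σ ↔ x.1 <:+ T (σ x.2) := by
  rw [pairsA, List.mem_flatMap]
  constructor
  · rintro ⟨U, hU, hx⟩
    rcases List.mem_map.1 hx with ⟨p, hp, rfl⟩
    exact (mem_plist T σ).mp hp
  · intro h
    exact ⟨x.1, (mem_sufA T).mpr ⟨σ x.2, h⟩,
      List.mem_map.2 ⟨x.2, (mem_plist T σ).mpr h, rfl⟩⟩

lemma nodup_pairsP : (pairsP T σ).Nodup := by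
  rw [pairsP, List.nodup_flatMap]
  constructor
  · intro p _
    refine List.Nodup.map_on ?_ List.nodup_range
    intro o ho o' ho' hx
    rw [List.mem_range] at ho ho'
    have := congrArg (fun y : List α × Fin k => y.1.length) hx
    simp only [List.length_drop] at this
    omega
  · refine List.Pairwise.imp ?_ (List.nodup_finRange k)
    intro p q hpq
    intro x hx hy
    rcases List.mem_map.1 hx with ⟨o, -, rfl⟩
    rcases List.mem_map.1 hy with ⟨o', -, he⟩
    exact hpq (congrArg Prod.snd he).symm

lemma nodup_pairsA : (pairsA T σ).Nodup := by
  rw [pairsA, List.nodup_flatMap]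
  constructor
  · intro U _
    exact (nodup_plist T σ U).map (fun p q h => congrArg Prod.snd h)
  · refine List.Pairwise.imp ?_ (nodup_sufA T)
    intro U V hUV x hx hy
    rcases List.mem_map.1 hx with ⟨p, -, rfl⟩
    rcases List.mem_map.1 hy with ⟨q, -, he⟩
    exact hUV (congrArg Prod.fst he).symm

lemma pairs_perm : (pairsA T σ).Perm (pairsP T σ) := by
  rw [List.perm_ext_iff_of_nodup (nodup_pairsA T σ) (nodup_pairsP T σ)]
  intro x
  rw [mem_pairsA, mem_pairsP]

lemma canon_eq_map : canon T σ = (pairsA T σ).map (fun x => rotC T σ x.2 x.1) := by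
  rw [canon, pairsA, List.map_flatMap]
  simp only [List.map_map]
  rfl

lemma mRots_eq_map : mRots T σ = (pairsP T σ).map (fun x => rotC T σ x.2 x.1) := by
  rw [mRots_eq, pairsP, List.map_flatMap]
  simp only [List.map_map]
  rfl

lemma canon_perm : (canon T σ).Perm (mRots T σ) := by
  rw [canon_eq_map, mRots_eq_map]
  exact (pairs_perm T σ).map _

end Word2
end BWTAux
namespace BWTAux
open List

section Word3
variable {α : Type*} [LinearOrder α] {k : ℕ} (T : Fin k → List α) (σ : Equiv.Perm (Fin k))

lemma canon_sorted : (canon T σ).Pairwise listLe := by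
  rw [canon, List.pairwise_flatMap]
  constructor
  · intro U _
    refine (pairwise_lt_plist T σ U).map _ ?_
    intro p q hpq
    exact Or.inr (lex_sep_lt U hpq _ _)
  · refine List.Pairwise.imp ?_ (pairwise_lt_sufA T)
    intro U V hUV x hx y hy
    rcases List.mem_map.1 hx with ⟨p, -, rfl⟩
    rcases List.mem_map.1 hy with ⟨q, -, rfl⟩
    exact Or.inr (lex_chr_lt hUV p q _ _)

/-- being a list that ends with a separator symbol. -/
def IsSepLast (l : List (Fin k ⊕ₗ α)) : Prop := ∃ p : Fin k, l.getLast? = some (sep p)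

lemma isSepLast_append {l m : List (Fin k ⊕ₗ α)} (h : IsSepLast m) : IsSepLast (l ++ m) := by
  obtain ⟨p, hp⟩ := h
  exact ⟨p, by rw [List.getLast?_append, hp]; rfl⟩

lemma isSepLast_blk (p : Fin k) : IsSepLast (blk T σ p) :=
  ⟨p, by rw [blk, List.getLast?_append]; rfl⟩

lemma isSepLast_flatMap : ∀ (ps : List (Fin k)) (l : List (Fin k ⊕ₗ α)),
    IsSepLast l → IsSepLast (l ++ ps.flatMap (blk T σ)) := by
  intro ps
  induction ps with
  | nil => intro l h; simpa using h
  | cons q ps ih =>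
    intro l h
    rw [List.flatMap_cons, ← List.append_assoc]
    exact ih _ (isSepLast_append (isSepLast_blk T σ q))

lemma lastOut_sepLast {X l : List (Fin k ⊕ₗ α)} (h : IsSepLast l) : lastOut (X ++ l) = ⊥ := by
  obtain ⟨p, hp⟩ := h
  have : (X ++ l).getLast? = some (sep p) := by
    rw [List.getLast?_append, hp]; rfl
  rw [lastOut, this]
  rfl

lemma lastOut_rotC {p : Fin k} {U : List α} (hU : U <:+ T (σ p)) :
    lastOut (rotC T σ p U) = precChar (T (σ p)) U := by
  set l := T (σ p) with hl
  set o := l.length - U.length with ho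
  rcases eq_or_ne (l.take o) [] with htake | htake
  · -- preceding character is a separator
    have hprec : precChar (T (σ p)) U = ⊥ := by
      rw [precChar, ← hl, ← ho, htake]
      rfl
    rw [hprec, rotC, ← hl, ← ho, htake, List.map_nil, List.append_nil]
    have hsl : IsSepLast ((sep p :: (((List.finRange k).drop (p.val + 1)).flatMap (blk T σ) ++
        ((List.finRange k).take p.val).flatMap (blk T σ)))) := by
      have h1 : IsSepLast ([sep p] ++ ((List.finRange k).drop (p.val + 1)).flatMap (blk T σ)) :=
        isSepLast_flatMap T σ _ [sep p] ⟨p, rfl⟩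
      have h2 := isSepLast_flatMap T σ (((List.finRange k).take p.val)) _ h1
      rw [List.append_assoc] at h2
      simpa using h2
    exact lastOut_sepLast hsl
  · -- preceding character is a letter
    obtain ⟨a, ha⟩ : ∃ a, (l.take o).getLast? = some a := by
      rw [List.getLast?_eq_getLast htake]
      exact ⟨_, rfl⟩
    have hprec : precChar (T (σ p)) U = (a : WithBot α) := by
      rw [precChar, ← hl, ← ho, ha]
    have hlast : (rotC T σ p U).getLast? = some (chr a) := by
      have hshape : rotC T σ p U = (U.map chr ++ sep p ::
          (((List.finRange k).drop (p.val + 1)).flatMap (blk T σ) ++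
            ((List.finRange k).take p.val).flatMap (blk T σ))) ++ (l.take o).map chr := by
        rw [rotC, ← hl, ← ho]
        simp [List.append_assoc]
      have h1 : ((l.take o).map (chr (k := k))).getLast? = some (chr a) := by
        rw [List.getLast?_map, ha]
        rfl
      rw [hshape, List.getLast?_append, h1]
      rfl
    rw [lastOut, hlast, hprec]
    rfl

end Word3
end BWTAux
namespace BWTAux
open List

section Word4
variable {α : Type*} [LinearOrder α] {k : ℕ} (T : Fin k → List α) (σ : Equiv.Perm (Fin k))

/-- the block of output characters associated to the suffix `U`. -/
def blkOut (U : List α) : List (WithBot α) :=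
  (plist T σ U).map (fun p => precChar (T (σ p)) U)

lemma mdolOf_canon : mdolOf (canon T σ) = (sufA T).flatMap (blkOut T σ) := by
  rw [mdolOf, canon, List.map_flatMap]
  congr 1
  funext U
  rw [List.map_map, blkOut]
  apply List.map_congr_left
  intro p hp
  exact lastOut_rotC T σ ((mem_plist T σ).mp hp)

lemma precChar_eq_headBot (X U : List α) :
    precChar X U = headBot ((X.take (X.length - U.length)).reverse) := by
  cases h : (X.take (X.length - U.length)).getLast? with
  | none => simp [precChar, headBot, List.head?_reverse, h]
  | some a => simp [precChar, headBot, List.head?_reverse, h]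

lemma precChar_le {X Y U : List α} (hX : U <:+ X) (hY : U <:+ Y)
    (h : listLe X.reverse Y.reverse) : precChar X U ≤ precChar Y U := by
  obtain ⟨PX, rfl⟩ := hX
  obtain ⟨PY, rfl⟩ := hY
  have htX : (PX ++ U).take ((PX ++ U).length - U.length) = PX :=
    List.take_left' (by simp)
  have htY : (PY ++ U).take ((PY ++ U).length - U.length) = PY :=
    List.take_left' (by simp)
  rw [precChar_eq_headBot, precChar_eq_headBot, htX, htY]
  apply headBot_le_of_listLe U.reverse
  rwa [List.reverse_append, List.reverse_append] at h

/-- nonemptiness of blocks. -/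
lemma blkOut_ne_nil {U : List α} (hU : ∃ i, U <:+ T i) : blkOut T σ U ≠ [] := by
  obtain ⟨i, hi⟩ := hU
  have : σ.symm i ∈ plist T σ U := (mem_plist T σ).mpr (by simpa using hi)
  rw [blkOut]
  intro hc
  rw [List.map_eq_nil_iff] at hc
  rw [hc] at this
  simp at this

/-- the block multiset does not depend on the permutation. -/
lemma blkOut_perm (γ : Equiv.Perm (Fin k)) (U : List α) :
    (blkOut T σ U).Perm (blkOut T γ U) := by
  have key : ∀ τ : Equiv.Perm (Fin k),
      ((plist T τ U).map τ).Perm ((List.finRange k).filter (fun i => decide (U <:+ T i))) := by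
    intro τ
    rw [List.perm_ext_iff_of_nodup
      ((nodup_plist T τ U).map τ.injective) (List.Nodup.filter _ (List.nodup_finRange k))]
    intro i
    rw [List.mem_map, List.mem_filter]
    constructor
    · rintro ⟨p, hp, rfl⟩
      exact ⟨List.mem_finRange _, by simpa using (mem_plist T τ).mp hp⟩
    · rintro ⟨-, h⟩
      rw [decide_eq_true_iff] at h
      exact ⟨τ.symm i, (mem_plist T τ).mpr (by simpa using h), by simp⟩
  have hrw : ∀ τ : Equiv.Perm (Fin k),
      blkOut T τ U = ((plist T τ U).map τ).map (fun i => precChar (T i) U) := by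
    intro τ
    rw [List.map_map, blkOut]
    rfl
  rw [hrw σ, hrw γ]
  exact ((key σ).map _).trans (((key γ).map _).symm)

end Word4
end BWTAux
namespace BWTAux
open List

section Word5
variable {α : Type*} [LinearOrder α] {k : ℕ} (T : Fin k → List α)

lemma blkOut_const (σ : Equiv.Perm (Fin k)) {U : List α} (h : ¬ Interesting T U) :
    ∀ x ∈ blkOut T σ U, ∀ y ∈ blkOut T σ U, x = y := by
  intro x hx y hy
  rw [blkOut, List.mem_map] at hx hy
  obtain ⟨p, hp, rfl⟩ := hx
  obtain ⟨q, hq, rfl⟩ := hy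
  rcases eq_or_ne (σ p) (σ q) with he | hne
  · rw [he]
  · by_contra hc
    exact h ⟨σ p, σ q, hne, (mem_plist T σ).mp hp, (mem_plist T σ).mp hq, hc⟩

lemma blkOut_eq (σ γ : Equiv.Perm (Fin k)) {U : List α} (h : ¬ Interesting T U) :
    blkOut T γ U = blkOut T σ U :=
  eq_of_perm_of_const (blkOut_perm T γ σ U) (blkOut_const T γ h)

lemma blkOut_sorted (γ : Equiv.Perm (Fin k))
    (hcolex : ∀ p q : Fin k, p ≤ q → listLe (T (γ p)).reverse (T (γ q)).reverse)
    (U : List α) : (blkOut T γ U).Pairwise (· ≤ ·) := by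
  rw [blkOut, List.pairwise_map]
  refine List.Pairwise.imp_of_mem ?_ (pairwise_lt_plist T γ U)
  intro p q hp hq hpq
  exact precChar_le ((mem_plist T γ).mp hp) ((mem_plist T γ).mp hq) (hcolex p q hpq.le)

end Word5
end BWTAux


/-- Let `γ` be a permutation arranging the strings of `M` in
colexicographic order (the reversed strings `T_{γ(1)}^rev,…,T_{γ(k)}^rev` are in
lexicographic order).  Then `runs(mdolBWT(M,γ)) ≤ r_OPT + 2·c_M`, where `r_OPT` is the
minimum of `runs(mdolBWT(M,σ))` over all permutations `σ` and `c_M` is the number of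
interesting intervals of `M` (the cardinality of the set `𝒰` of shared suffixes
defining them); equivalently, the bound holds against every permutation `σ`. -/
theorem colexBWT_runs_le_opt_add {α : Type*} [LinearOrder α]
    (k : ℕ) (hk : 2 ≤ k) (T : Fin k → List α) (hT : ∀ i, T i ≠ [])
    (γ : Equiv.Perm (Fin k))
    (hcolex : ∀ p q : Fin k, p ≤ q → listLe (T (γ p)).reverse (T (γ q)).reverse)
    (𝒰 : Finset (List α)) (h𝒰 : ∀ U, U ∈ 𝒰 ↔ Interesting T U)
    (Lγ : List (List (Fin k ⊕ₗ α))) (hpermγ : Lγ.Perm (mRots T γ))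
    (hsortγ : Lγ.Pairwise listLe)
    (σ : Equiv.Perm (Fin k))
    (Lσ : List (List (Fin k ⊕ₗ α))) (hpermσ : Lσ.Perm (mRots T σ))
    (hsortσ : Lσ.Pairwise listLe) :
    runs (mdolOf Lγ) ≤ runs (mdolOf Lσ) + 2 * 𝒰.card := by
  classical
  open BWTAux in
  haveI : IsAntisymm (List (Fin k ⊕ₗ α)) listLe := ⟨fun _ _ => listLe_antisymm _ _⟩
  have hLγ : Lγ = canon T γ :=
    List.Perm.eq_of_pairwise' hsortγ (canon_sorted T γ) (hpermγ.trans (canon_perm T γ).symm)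
  have hLσ : Lσ = canon T σ :=
    List.Perm.eq_of_pairwise' hsortσ (canon_sorted T σ) (hpermσ.trans (canon_perm T σ).symm)
  rw [hLγ, hLσ, mdolOf_canon, mdolOf_canon, runs_eq_frun, runs_eq_frun]
  set PL : List ((List (WithBot α) × List (WithBot α)) × Bool) :=
    (sufA T).map (fun U => ((blkOut T γ U, blkOut T σ U), decide (Interesting T U))) with hPL
  have h1 : (PL.map (fun x => x.1.1)) = (sufA T).map (blkOut T γ) := by
    rw [hPL, List.map_map]; rfl
  have h2 : (PL.map (fun x => x.1.2)) = (sufA T).map (blkOut T σ) := by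
    rw [hPL, List.map_map]; rfl
  have hcomb := comb PL none none
    (by
      rintro x hx
      rw [hPL, List.mem_map] at hx
      obtain ⟨U, hU, rfl⟩ := hx
      exact blkOut_ne_nil T γ ((mem_sufA T).mp hU))
    (by
      rintro x hx hfalse
      rw [hPL, List.mem_map] at hx
      obtain ⟨U, hU, rfl⟩ := hx
      simp only [decide_eq_false_iff_not] at hfalse
      exact ⟨blkOut_eq T σ γ hfalse, blkOut_const T γ hfalse⟩)
    (by
      rintro x hx htrue
      rw [hPL, List.mem_map] at hx
      obtain ⟨U, hU, rfl⟩ := hx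
      refine ⟨blkOut_ne_nil T σ ((mem_sufA T).mp hU), ?_⟩
      rw [← runs_eq_frun, ← runs_eq_frun]
      exact runs_le_of_sorted_perm (blkOut_sorted T γ hcolex U) (blkOut_perm T γ σ U))
  rw [h1, h2] at hcomb
  have hcnt : PL.countP (fun x => x.2) = 𝒰.card := by
    rw [hPL, List.countP_map]
    have hfil : 𝒰 = ((sufA T).filter (fun U => decide (Interesting T U))).toFinset := by
      ext U
      rw [List.mem_toFinset, List.mem_filter, decide_eq_true_iff, h𝒰]
      constructor
      · intro h
        obtain ⟨i, _, _, hsuf, _, _⟩ := id h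
        exact ⟨(mem_sufA T).mpr ⟨i, hsuf⟩, h⟩
      · exact fun h => h.2
    rw [hfil, List.toFinset_card_of_nodup ((nodup_sufA T).filter _),
      ← List.countP_eq_length_filter]
    rfl
  rw [hcnt] at hcomb
  simpa [List.flatMap] using hcomb
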